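/- With N(x,ξ;t,τ) = K(x,ξ;t,τ) + K(−x,ξ;t,τ) where K(x,ξ;t,τ) = (1/(2√(π(t−τ)))) exp(−(x−ξ)²/(4(t−τ))) for τ < t, and s, s̃ continuous functions with s(t), s̃(t) ≥ b > 0 on [0,T], and h ∈ C([0,T]): |∫_0^t [N(s(t),0;t,τ) − N(s̃(t),0;t,τ)] h(τ) dτ| ≤ C ‖s − s̃‖_∞, where C depends only on b, T, ‖h‖_∞, and max(‖s‖_∞, ‖s̃‖_∞). -/

import Mathlib

/-- The heat kernel `K(x,ξ;t,τ)`. -/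
noncomputable def Kheat (x ξ t τ : ℝ) : ℝ :=
  (1 / (2 * Real.sqrt (Real.pi * (t - τ)))) * Real.exp (-(x - ξ)^2 / (4 * (t - τ)))

/-- The Neumann function `N = K(x,ξ;t,τ) + K(-x,ξ;t,τ)`. -/
noncomputable def Nheat (x ξ t τ : ℝ) : ℝ := Kheat x ξ t τ + Kheat (-x) ξ t τ

lemma exp_sub_exp_le_aux (c A B : ℝ) (hA : c ≤ A) (hB : c ≤ B) :
    |Real.exp (-A) - Real.exp (-B)| ≤ Real.exp (-c) * |A - B| := by
  wlog hAB : A ≤ B generalizing A B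
  · rw [abs_sub_comm, abs_sub_comm A B]; exact this B A hB hA (le_of_not_ge hAB)
  have h1 : Real.exp (-B) ≤ Real.exp (-A) := Real.exp_le_exp.2 (by linarith)
  have h2 : Real.exp (-A) ≤ Real.exp (-c) := Real.exp_le_exp.2 (by linarith)
  have h3 : (A - B) + 1 ≤ Real.exp (A - B) := Real.add_one_le_exp _
  have h4 : Real.exp (-B) = Real.exp (-A) * Real.exp (A - B) := by
    rw [← Real.exp_add]; ring_nf
  rw [abs_of_nonneg (by linarith), abs_of_nonpos (by linarith)]
  have hp := Real.exp_pos (-A)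
  nlinarith [Real.exp_pos (A - B)]

lemma exp_neg_le_aux (v : ℝ) (hv : 0 < v) : Real.exp (-v) ≤ 4 / v ^ 2 := by
  have h : v / 2 ≤ Real.exp (v / 2) := by
    have := Real.add_one_le_exp (v / 2); linarith
  have hev : Real.exp (v / 2) * Real.exp (v / 2) = Real.exp v := by
    rw [← Real.exp_add]; ring_nf
  have hq : v ^ 2 / 4 ≤ Real.exp v := by nlinarith
  have hm : Real.exp (-v) * Real.exp v = 1 := by
    rw [← Real.exp_add]; simp
  rw [le_div_iff₀ (by positivity)]
  nlinarith [Real.exp_pos (-v), Real.exp_pos v]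

lemma Ndiff_bound (b S t τ x y : ℝ) (hb : 0 < b) (hr : 0 < t - τ)
    (hx : b ≤ x) (hxS : x ≤ S) (hy : b ≤ y) (hyS : y ≤ S) :
    |Nheat x 0 t τ - Nheat y 0 t τ| ≤
      32 * S * Real.sqrt (t - τ) / (b ^ 4 * Real.sqrt Real.pi) * |x - y| := by
  have hπ := Real.pi_pos
  have hsr : 0 < Real.sqrt (t - τ) := Real.sqrt_pos.2 hr
  have hsπ : 0 < Real.sqrt Real.pi := Real.sqrt_pos.2 hπ
  have hsπr : Real.sqrt (Real.pi * (t - τ)) = Real.sqrt Real.pi * Real.sqrt (t - τ) :=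
    Real.sqrt_mul hπ.le _
  have hrr : Real.sqrt (t - τ) * Real.sqrt (t - τ) = t - τ := Real.mul_self_sqrt hr.le
  have hNx : ∀ z : ℝ, Nheat z 0 t τ =
      1 / (Real.sqrt Real.pi * Real.sqrt (t - τ)) * Real.exp (-(z ^ 2 / (4 * (t - τ)))) := by
    intro z
    unfold Nheat Kheat
    rw [show (-z - 0 : ℝ) ^ 2 = z ^ 2 by ring, show (z - 0 : ℝ) ^ 2 = z ^ 2 by ring, hsπr,
      show -z ^ 2 / (4 * (t - τ)) = -(z ^ 2 / (4 * (t - τ))) by ring]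
    field_simp
    ring
  rw [hNx, hNx, ← mul_sub, abs_mul, abs_of_pos (by positivity)]
  have hcb : (0:ℝ) < b ^ 2 / (4 * (t - τ)) := by positivity
  have e1 : |Real.exp (-(x ^ 2 / (4 * (t - τ)))) - Real.exp (-(y ^ 2 / (4 * (t - τ))))| ≤
      Real.exp (-(b ^ 2 / (4 * (t - τ)))) * |x ^ 2 / (4 * (t - τ)) - y ^ 2 / (4 * (t - τ))| := by
    apply exp_sub_exp_le_aux
    · exact (div_le_div_iff_of_pos_right (by linarith)).2 (by nlinarith)
    · exact (div_le_div_iff_of_pos_right (by linarith)).2 (by nlinarith)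
  have e2 : Real.exp (-(b ^ 2 / (4 * (t - τ)))) ≤ 64 * (t - τ) ^ 2 / b ^ 4 := by
    have := exp_neg_le_aux (b ^ 2 / (4 * (t - τ))) hcb
    have heq : 4 / (b ^ 2 / (4 * (t - τ))) ^ 2 = 64 * (t - τ) ^ 2 / b ^ 4 := by
      field_simp; ring
    linarith [heq ▸ this]
  have e3 : |x ^ 2 / (4 * (t - τ)) - y ^ 2 / (4 * (t - τ))| ≤ 2 * S * |x - y| / (4 * (t - τ)) := by
    have h4r : (0:ℝ) < 4 * (t - τ) := by linarith
    rw [div_sub_div_same, abs_div, abs_of_pos h4r,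
      show x ^ 2 - y ^ 2 = (x - y) * (x + y) by ring, abs_mul, abs_of_pos (show (0:ℝ) < x + y by linarith),
      show 2 * S * |x - y| = |x - y| * (2 * S) by ring]
    apply (div_le_div_iff_of_pos_right h4r).2
    have := abs_nonneg (x - y)
    nlinarith
  have e4 : |Real.exp (-(x ^ 2 / (4 * (t - τ)))) - Real.exp (-(y ^ 2 / (4 * (t - τ))))| ≤
      (64 * (t - τ) ^ 2 / b ^ 4) * (2 * S * |x - y| / (4 * (t - τ))) := by
    calc _ ≤ Real.exp (-(b ^ 2 / (4 * (t - τ)))) *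
        |x ^ 2 / (4 * (t - τ)) - y ^ 2 / (4 * (t - τ))| := e1
      _ ≤ (64 * (t - τ) ^ 2 / b ^ 4) * (2 * S * |x - y| / (4 * (t - τ))) := by
          apply mul_le_mul e2 e3 (abs_nonneg _) (by positivity)
  calc 1 / (Real.sqrt Real.pi * Real.sqrt (t - τ)) *
      |Real.exp (-(x ^ 2 / (4 * (t - τ)))) - Real.exp (-(y ^ 2 / (4 * (t - τ))))| ≤
      1 / (Real.sqrt Real.pi * Real.sqrt (t - τ)) *
        ((64 * (t - τ) ^ 2 / b ^ 4) * (2 * S * |x - y| / (4 * (t - τ)))) := by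
        apply mul_le_mul_of_nonneg_left e4 (by positivity)
    _ = 32 * S * Real.sqrt (t - τ) / (b ^ 4 * Real.sqrt Real.pi) * |x - y| := by
        have hsq : Real.sqrt (t - τ) ^ 2 = t - τ := Real.sq_sqrt hr.le
        field_simp
        linear_combination (-(128 * S * |x - y|)) * hsq

theorem stmt_10 (b T Hb S : ℝ) (hb : 0 < b) (hT : 0 < T) (hHb : 0 < Hb) (hS : b ≤ S) :
    ∃ C > 0, ∀ s st h : ℝ → ℝ,
      ContinuousOn s (Set.Icc 0 T) → ContinuousOn st (Set.Icc 0 T) →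
      ContinuousOn h (Set.Icc 0 T) →
      (∀ t ∈ Set.Icc (0:ℝ) T, b ≤ s t ∧ s t ≤ S) →
      (∀ t ∈ Set.Icc (0:ℝ) T, b ≤ st t ∧ st t ≤ S) →
      (∀ t ∈ Set.Icc (0:ℝ) T, |h t| ≤ Hb) →
      ∀ t ∈ Set.Icc (0:ℝ) T,
        |∫ τ in (0:ℝ)..t, (Nheat (s t) 0 t τ - Nheat (st t) 0 t τ) * h τ| ≤
          C * sSup ((fun r => |s r - st r|) '' Set.Icc 0 T) := by
  have hπ := Real.pi_pos
  have hsπ : 0 < Real.sqrt Real.pi := Real.sqrt_pos.2 hπ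
  have hsT : 0 < Real.sqrt T := Real.sqrt_pos.2 hT
  have hS0 : 0 < S := lt_of_lt_of_le hb hS
  refine ⟨Hb * (32 * S * Real.sqrt T / (b ^ 4 * Real.sqrt Real.pi)) * T, by positivity, ?_⟩
  intro s st h hcs hcst hch hsb hstb hhb t ht
  obtain ⟨ht0, htT⟩ := ht
  set M := sSup ((fun r => |s r - st r|) '' Set.Icc 0 T) with hMdef
  have hbdd : BddAbove ((fun r => |s r - st r|) '' Set.Icc 0 T) := by
    refine ⟨2 * S, ?_⟩
    rintro _ ⟨r, hr, rfl⟩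
    have h1 := hsb r hr; have h2 := hstb r hr
    rw [abs_le]
    constructor <;> [linarith [h1.1, h1.2, h2.1, h2.2]; linarith [h1.1, h1.2, h2.1, h2.2]]
  have hMt : |s t - st t| ≤ M := le_csSup hbdd ⟨t, ⟨ht0, htT⟩, rfl⟩
  have hM0 : (0:ℝ) ≤ M := le_trans (abs_nonneg _) hMt
  have key : ∀ τ ∈ Set.uIoc (0:ℝ) t, ‖(Nheat (s t) 0 t τ - Nheat (st t) 0 t τ) * h τ‖ ≤
      Hb * (32 * S * Real.sqrt T / (b ^ 4 * Real.sqrt Real.pi)) * M := by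
    intro τ hτ
    rw [Set.uIoc_of_le ht0] at hτ
    obtain ⟨hτ0, hτt⟩ := hτ
    have hτT : τ ≤ T := hτt.trans htT
    have hhτ : |h τ| ≤ Hb := hhb τ ⟨hτ0.le, hτT⟩
    rcases eq_or_lt_of_le hτt with heq | hlt
    · have hK : ∀ z : ℝ, Kheat z 0 t t = 0 := by
        intro z; simp [Kheat]
      rw [heq]
      simp only [Nheat, hK, add_zero, sub_zero, sub_self, zero_mul, norm_zero]
      positivity
    · have hst1 := hsb t ⟨ht0, htT⟩
      have hst2 := hstb t ⟨ht0, htT⟩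
      have hdiff := Ndiff_bound b S t τ (s t) (st t) hb (by linarith) hst1.1 hst1.2 hst2.1 hst2.2
      rw [Real.norm_eq_abs, abs_mul]
      have hsqrt : Real.sqrt (t - τ) ≤ Real.sqrt T := Real.sqrt_le_sqrt (by linarith)
      calc |Nheat (s t) 0 t τ - Nheat (st t) 0 t τ| * |h τ| ≤
          (32 * S * Real.sqrt (t - τ) / (b ^ 4 * Real.sqrt Real.pi) * |s t - st t|) * Hb := by
            apply mul_le_mul hdiff hhτ (abs_nonneg _) (by positivity)
        _ ≤ (32 * S * Real.sqrt T / (b ^ 4 * Real.sqrt Real.pi) * M) * Hb := by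
            gcongr
        _ = Hb * (32 * S * Real.sqrt T / (b ^ 4 * Real.sqrt Real.pi)) * M := by ring
  have hint := intervalIntegral.norm_integral_le_of_norm_le_const key
  rw [Real.norm_eq_abs] at hint
  calc |∫ τ in (0:ℝ)..t, (Nheat (s t) 0 t τ - Nheat (st t) 0 t τ) * h τ| ≤
      Hb * (32 * S * Real.sqrt T / (b ^ 4 * Real.sqrt Real.pi)) * M * |t - 0| := hint
    _ ≤ Hb * (32 * S * Real.sqrt T / (b ^ 4 * Real.sqrt Real.pi)) * M * T := by
        rw [sub_zero, abs_of_nonneg ht0]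
        exact mul_le_mul_of_nonneg_left htT (by positivity)
    _ = Hb * (32 * S * Real.sqrt T / (b ^ 4 * Real.sqrt Real.pi)) * T * M := by ring
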